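/- Let a > 0 and d_L ∈ ℝ, and let F_R(z) = D_R + C_R(zI_m - A_R)^{-1}B_R be a q×q rational function with D_R + aI_q invertible. Define f_L(w) = d_L + 1/(w+a)². Then f_L(F_R(z)) = d_L I_q + (aI_q + F_R(z))^{-2} admits the 2m-dimensional realization with A = [[A_R - B_R E^{-1}C_R, -B_R E^{-2}C_R],[0, A_R - B_R E^{-1}C_R]], B = [-B_R E^{-2}; -B_R E^{-1}], C = [E^{-1}C_R, E^{-2}C_R], D = d_L I_q + E^{-2}, where E := D_R + aI_q; i.e., for all z where everything is defined, d_L I_q + (aI_q + F_R(z))^{-2} = D + C(zI_{2m} - A)^{-1}B. -/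

import Mathlib

open Matrix

lemma aux18 {n p : Type*} [Fintype n] [DecidableEq n] [Fintype p] [DecidableEq p]
    (G : Matrix n n ℂ) (B : Matrix n p ℂ) (C : Matrix p n ℂ) (E : Matrix p p ℂ) (d : ℂ)
    (hG : IsUnit G.det) (hEu : IsUnit E.det)
    (hX : IsUnit (E + C * G⁻¹ * B).det)
    (hH : IsUnit (G + B * E⁻¹ * C).det) :
    d • (1 : Matrix p p ℂ) + (E + C * G⁻¹ * B)⁻¹ * (E + C * G⁻¹ * B)⁻¹
      = (d • (1 : Matrix p p ℂ) + E⁻¹ * E⁻¹)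
        + fromCols (E⁻¹ * C) (E⁻¹ * E⁻¹ * C)
          * (fromBlocks (G + B * E⁻¹ * C) (B * E⁻¹ * E⁻¹ * C) 0
              (G + B * E⁻¹ * C))⁻¹
          * fromRows (-(B * E⁻¹ * E⁻¹)) (-(B * E⁻¹)) := by
  have hGG : G * G⁻¹ = 1 := mul_nonsing_inv G hG
  have hGG' : G⁻¹ * G = 1 := nonsing_inv_mul G hG
  have hEE : E * E⁻¹ = 1 := mul_nonsing_inv E hEu
  have hEE' : E⁻¹ * E = 1 := nonsing_inv_mul E hEu
  have hHH : (G + B * E⁻¹ * C) * (G + B * E⁻¹ * C)⁻¹ = 1 := mul_nonsing_inv _ hH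
  have hHH' : (G + B * E⁻¹ * C)⁻¹ * (G + B * E⁻¹ * C) = 1 := nonsing_inv_mul _ hH
  set H := G + B * E⁻¹ * C with hHdef
  set M := B * E⁻¹ * E⁻¹ * C with hMdef
  -- block inverse
  have hbinv : (fromBlocks H M 0 H)⁻¹
      = fromBlocks H⁻¹ (-(H⁻¹ * M * H⁻¹)) 0 H⁻¹ := by
    apply inv_eq_right_inv
    rw [fromBlocks_multiply]
    simp only [Matrix.mul_zero, Matrix.zero_mul, add_zero, zero_add, hHH, Matrix.mul_neg]
    rw [← Matrix.mul_assoc, ← Matrix.mul_assoc, hHH, Matrix.one_mul]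
    simp [← fromBlocks_one]
  -- inverse realization
  have key : C * G⁻¹ * (B * E⁻¹ * C) * H⁻¹ = C * G⁻¹ - C * H⁻¹ := by
    have h1 : B * E⁻¹ * C = H - G := by rw [hHdef]; abel
    rw [h1, Matrix.mul_sub, Matrix.sub_mul, Matrix.mul_assoc (C * G⁻¹) H H⁻¹, hHH,
      Matrix.mul_one, Matrix.mul_assoc C G⁻¹ G, hGG', Matrix.mul_one]
  have hXinv : (E + C * G⁻¹ * B)⁻¹ = E⁻¹ - E⁻¹ * C * H⁻¹ * B * E⁻¹ := by
    apply inv_eq_right_inv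
    have expand : (E + C * G⁻¹ * B) * (E⁻¹ - E⁻¹ * C * H⁻¹ * B * E⁻¹)
        = E * E⁻¹ - E * E⁻¹ * (C * (H⁻¹ * (B * E⁻¹)))
          + C * (G⁻¹ * (B * E⁻¹))
          - C * G⁻¹ * (B * E⁻¹ * C) * H⁻¹ * (B * E⁻¹) := by
      simp only [Matrix.mul_sub, Matrix.sub_mul, Matrix.add_mul, Matrix.mul_add,
        Matrix.mul_assoc]
      abel
    rw [expand, key, hEE]
    simp only [Matrix.one_mul, Matrix.sub_mul, Matrix.mul_assoc]
    abel
  rw [hXinv, hbinv, fromCols_mul_fromBlocks, fromCols_mul_fromRows]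
  simp only [Matrix.mul_zero, add_zero, Matrix.sub_mul, Matrix.mul_sub, Matrix.mul_neg,
    Matrix.neg_mul, Matrix.add_mul, Matrix.mul_add, neg_neg, Matrix.mul_assoc, hMdef]
  abel

theorem stmt18 (m q : ℕ) (a d_L : ℝ) (ha : 0 < a)
    (A_R : Matrix (Fin m) (Fin m) ℂ) (B_R : Matrix (Fin m) (Fin q) ℂ)
    (C_R : Matrix (Fin q) (Fin m) ℂ) (D_R : Matrix (Fin q) (Fin q) ℂ)
    (E : Matrix (Fin q) (Fin q) ℂ)
    (hE : E = D_R + (a : ℂ) • (1 : Matrix (Fin q) (Fin q) ℂ))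
    (hEunit : IsUnit E.det)
    (z : ℂ)
    (hz : IsUnit (z • (1 : Matrix (Fin m) (Fin m) ℂ) - A_R).det)
    (hFa : IsUnit ((a : ℂ) • (1 : Matrix (Fin q) (Fin q) ℂ)
        + (D_R + C_R * (z • (1 : Matrix (Fin m) (Fin m) ℂ) - A_R)⁻¹ * B_R)).det)
    (hcomp : IsUnit (z • (1 : Matrix (Fin m ⊕ Fin m) (Fin m ⊕ Fin m) ℂ)
        - Matrix.fromBlocks
            (A_R - B_R * E⁻¹ * C_R) (-(B_R * E⁻¹ * E⁻¹ * C_R))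
            0 (A_R - B_R * E⁻¹ * C_R)).det) :
    (d_L : ℂ) • (1 : Matrix (Fin q) (Fin q) ℂ)
      + ((a : ℂ) • (1 : Matrix (Fin q) (Fin q) ℂ)
          + (D_R + C_R * (z • (1 : Matrix (Fin m) (Fin m) ℂ) - A_R)⁻¹ * B_R))⁻¹
        * ((a : ℂ) • (1 : Matrix (Fin q) (Fin q) ℂ)
          + (D_R + C_R * (z • (1 : Matrix (Fin m) (Fin m) ℂ) - A_R)⁻¹ * B_R))⁻¹
    = ((d_L : ℂ) • (1 : Matrix (Fin q) (Fin q) ℂ) + E⁻¹ * E⁻¹)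
      + Matrix.fromCols (E⁻¹ * C_R) (E⁻¹ * E⁻¹ * C_R)
        * (z • (1 : Matrix (Fin m ⊕ Fin m) (Fin m ⊕ Fin m) ℂ)
            - Matrix.fromBlocks
                (A_R - B_R * E⁻¹ * C_R) (-(B_R * E⁻¹ * E⁻¹ * C_R))
                0 (A_R - B_R * E⁻¹ * C_R))⁻¹
        * Matrix.fromRows (-(B_R * E⁻¹ * E⁻¹)) (-(B_R * E⁻¹)) := by
  have hE' : (a : ℂ) • (1 : Matrix (Fin q) (Fin q) ℂ)
      + (D_R + C_R * (z • (1 : Matrix (Fin m) (Fin m) ℂ) - A_R)⁻¹ * B_R)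
      = E + C_R * (z • (1 : Matrix (Fin m) (Fin m) ℂ) - A_R)⁻¹ * B_R := by
    rw [hE]; abel
  have hblk : z • (1 : Matrix (Fin m ⊕ Fin m) (Fin m ⊕ Fin m) ℂ)
      - Matrix.fromBlocks (A_R - B_R * E⁻¹ * C_R) (-(B_R * E⁻¹ * E⁻¹ * C_R))
          0 (A_R - B_R * E⁻¹ * C_R)
      = fromBlocks ((z • (1 : Matrix (Fin m) (Fin m) ℂ) - A_R) + B_R * E⁻¹ * C_R)
          (B_R * E⁻¹ * E⁻¹ * C_R) 0
          ((z • (1 : Matrix (Fin m) (Fin m) ℂ) - A_R) + B_R * E⁻¹ * C_R) := by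
    rw [← fromBlocks_one, fromBlocks_smul, sub_eq_add_neg, fromBlocks_neg, fromBlocks_add]
    abel_nf
    simp
  rw [hblk] at hcomp
  have hH : IsUnit ((z • (1 : Matrix (Fin m) (Fin m) ℂ) - A_R) + B_R * E⁻¹ * C_R).det := by
    rw [det_fromBlocks_zero₂₁] at hcomp
    exact isUnit_of_mul_isUnit_left hcomp
  rw [hE', hblk]
  exact aux18 (z • 1 - A_R) B_R C_R E (d_L : ℂ) hz hEunit (by rw [hE'] at hFa; exact hFa) hH
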